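/- Let (x, y, z) = (3, 1, 2) and, for each integer n ≥ 2, let A^{(n)} be the real symmetric matrix indexed by the 2-element subsets of [n] with entries A^{(n)}_{e,f} = x if e = f, A^{(n)}_{e,f} = y if |e ∩ f| = 1, and A^{(n)}_{e,f} = z if e ∩ f = ∅. Then A^{(4)} is positive definite (all its eigenvalues are strictly positive), yet there exists an integer n ≥ 4 for which A^{(n)} is not positive semidefinite. -/

import Mathlib

open Finset

/-- The 2-element subsets ("edges") of `[n] = {1,…,n}`, modeled inside `ℕ`. -/
def edgesN (n : ℕ) : Finset (Finset ℕ) := (Finset.Icc 1 n).powersetCard 2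

/-- The matrix indexed by the 2-subsets of `[n]` with entries `x = 3` on the diagonal,
`y = 1` for intersecting pairs and `z = 2` for disjoint pairs. -/
def Amat312 (n : ℕ) : Matrix ↥(edgesN n) ↥(edgesN n) ℝ :=
  Matrix.of fun e f => if e = f then 3 else if (e.1 ∩ f.1).card = 1 then 1 else 2


lemma mem_edgesN {n : ℕ} {s : Finset ℕ} : s ∈ edgesN n ↔ s ⊆ Finset.Icc 1 n ∧ s.card = 2 := by
  simp [edgesN, Finset.mem_powersetCard]

lemma herm (n : ℕ) : (Amat312 n).IsHermitian := by
  ext e f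
  simp only [Amat312, Matrix.conjTranspose_apply, Matrix.of_apply, star_trivial]
  by_cases h : e = f
  · simp [h]
  · simp [h, Ne.symm h, Finset.inter_comm]

def sig : ↥(edgesN 4) → ↥(edgesN 4) := fun e =>
  ⟨Finset.Icc 1 4 \ e.1, by
    obtain ⟨hsub, hcard⟩ := mem_edgesN.mp e.2
    refine mem_edgesN.mpr ⟨Finset.sdiff_subset, ?_⟩
    rw [Finset.card_sdiff_of_subset hsub, hcard]
    decide⟩

lemma sig_sig (e : ↥(edgesN 4)) : sig (sig e) = e := by
  obtain ⟨hsub, hcard⟩ := mem_edgesN.mp e.2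
  exact Subtype.ext (Finset.sdiff_sdiff_eq_self hsub)

lemma sig_disj (e : ↥(edgesN 4)) : e.1 ∩ (sig e).1 = ∅ := by
  simp [sig, Finset.inter_sdiff_self]

lemma entry (e f : ↥(edgesN 4)) :
    Amat312 4 e f = 1 + (if e = f then 2 else 0) + (if sig e = f then 1 else 0) := by
  obtain ⟨hsubE, hcardE⟩ := mem_edgesN.mp e.2
  obtain ⟨hsubF, hcardF⟩ := mem_edgesN.mp f.2
  by_cases h : e = f
  · subst h
    have hne : sig e ≠ e := by
      intro hh
      have := sig_disj e
      rw [hh, Finset.inter_self] at this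
      rw [this] at hcardE; simp at hcardE
    simp [Amat312, hne]; norm_num
  · by_cases h1 : (e.1 ∩ f.1).card = 1
    · have hne : sig e ≠ f := by
        rintro rfl
        rw [sig_disj e] at h1; simp at h1
      simp [Amat312, h, h1, hne]
    · -- card e∩f is 0 or 2; 2 → e=f; so 0 → f = sig e
      have hle : (e.1 ∩ f.1).card ≤ 2 := by
        calc (e.1 ∩ f.1).card ≤ e.1.card := Finset.card_le_card Finset.inter_subset_left
        _ = 2 := hcardE
      have h0 : (e.1 ∩ f.1).card = 0 ∨ (e.1 ∩ f.1).card = 2 := by omega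
      rcases h0 with h0 | h2
      · have hdisj : Disjoint e.1 f.1 := by
          rw [Finset.disjoint_iff_inter_eq_empty, ← Finset.card_eq_zero]; exact h0
        have hfs : f.1 ⊆ (sig e).1 := fun x hx =>
          Finset.mem_sdiff.mpr ⟨hsubF hx, fun hxe => (Finset.disjoint_left.mp hdisj hxe) hx⟩
        have : (sig e).1 = f.1 := by
          apply Finset.eq_of_subset_of_card_le ?_ ?_ |>.symm
          · exact hfs
          · rw [hcardF, (mem_edgesN.mp (sig e).2).2]
        have heq : sig e = f := Subtype.ext this
        simp [Amat312, h, h1, heq]; norm_num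
      · exfalso
        have : e.1 ∩ f.1 = e.1 := Finset.eq_of_subset_of_card_le Finset.inter_subset_left (by omega)
        have he : e.1 ⊆ f.1 := by rw [← this]; exact Finset.inter_subset_right
        exact h (Subtype.ext (Finset.eq_of_subset_of_card_le he (by omega)))

open Matrix in
def sigEquiv : Equiv.Perm ↥(edgesN 4) := Function.Involutive.toPerm sig sig_sig

open Matrix in
lemma quad_form (x : ↥(edgesN 4) → ℝ) :
    dotProduct x (Amat312 4 *ᵥ x) =
      (∑ e, x e)^2 + 2 * ∑ e, x e ^ 2 + ∑ e, x e * x (sig e) := by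
  simp only [dotProduct, Matrix.mulVec, entry]
  have : ∀ e : ↥(edgesN 4),
      x e * (∑ f, (1 + (if e = f then (2:ℝ) else 0) + (if sig e = f then 1 else 0)) * x f)
      = x e * (∑ f, x f) + 2 * x e ^ 2 + x e * x (sig e) := by
    intro e
    have h1 : ∑ f, ((1:ℝ) + (if e = f then (2:ℝ) else 0) + (if sig e = f then 1 else 0)) * x f
        = (∑ f, x f) + 2 * x e + x (sig e) := by
      simp only [add_mul, one_mul, Finset.sum_add_distrib, ite_mul, zero_mul,
        Finset.sum_ite_eq, Finset.mem_univ, if_true]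
    rw [h1]; ring
  rw [Finset.sum_congr rfl (fun e _ => this e), Finset.sum_add_distrib,
    Finset.sum_add_distrib, ← Finset.sum_mul, ← sq, Finset.mul_sum]

open Matrix in
lemma partA : (Amat312 4).PosDef := by
  refine Matrix.posDef_iff_dotProduct_mulVec.mpr ⟨herm 4, fun x hx => ?_⟩
  have hstar : star x = x := by simp
  rw [hstar, quad_form x]
  have hswap : ∑ e, x (sig e) ^ 2 = ∑ e, x e ^ 2 :=
    Fintype.sum_equiv sigEquiv _ _ (fun e => by simp [sigEquiv]; rfl)
  have hsq : 0 ≤ ∑ e, (x e + x (sig e))^2 :=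
    Finset.sum_nonneg (fun e _ => sq_nonneg _)
  have hexp : ∑ e, (x e + x (sig e))^2
      = 2 * ∑ e, x e ^ 2 + 2 * ∑ e, x e * x (sig e) := by
    have : ∀ e : ↥(edgesN 4), (x e + x (sig e))^2
        = x e ^ 2 + x (sig e) ^ 2 + 2 * (x e * x (sig e)) := fun e => by ring
    rw [Finset.sum_congr rfl (fun e _ => this e), Finset.sum_add_distrib,
      Finset.sum_add_distrib, hswap, ← Finset.mul_sum]
    ring
  have hkey : - ∑ e, x e ^ 2 ≤ ∑ e, x e * x (sig e) := by
    rw [hexp] at hsq; linarith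
  have hpos : 0 < ∑ e, x e ^ 2 := by
    obtain ⟨e, he⟩ := Function.ne_iff.mp hx
    apply Finset.sum_pos' (fun f _ => sq_nonneg _) ⟨e, Finset.mem_univ e, ?_⟩
    simpa using pow_pos (abs_pos.mpr he) 2 |>.trans_eq (by rw [sq_abs])
  nlinarith [sq_nonneg (∑ e, x e)]


def wvec (s : Finset ℕ) : ℝ :=
  if 1 ∈ s then (if 2 ∈ s then 0 else 1) else if 2 ∈ s then -1 else 0

def gmat (s t : Finset ℕ) : ℝ :=
  if s = t then 3 else if (s ∩ t).card = 1 then 1 else 2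

lemma hE6 : edgesN 6 = ({{1,2}, {1,3}, {1,4}, {1,5}, {1,6}, {2,3}, {2,4}, {2,5}, {2,6}, {3,4}, {3,5}, {3,6}, {4,5}, {4,6}, {5,6}} : Finset (Finset ℕ)) := by decide

set_option maxHeartbeats 4000000 in
open Matrix in
lemma neg_quad : dotProduct (fun e : ↥(edgesN 6) => wvec e.1)
    (Amat312 6 *ᵥ (fun e : ↥(edgesN 6) => wvec e.1)) = -8 := by
  have hA : ∀ e f : ↥(edgesN 6), Amat312 6 e f = gmat e.1 f.1 := by
    intro e f
    simp only [Amat312, gmat, Matrix.of_apply, Subtype.ext_iff]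
  simp only [dotProduct, Matrix.mulVec, dotProduct, hA]
  have step1 : ∀ e : ↥(edgesN 6), (∑ f : ↥(edgesN 6), gmat e.1 f.1 * wvec f.1)
      = ∑ t ∈ edgesN 6, gmat e.1 t * wvec t := fun e => Finset.sum_coe_sort (edgesN 6) (fun t => gmat e.1 t * wvec t)
  simp only [step1]
  rw [Finset.sum_coe_sort (edgesN 6) (fun s => wvec s * ∑ t ∈ edgesN 6, gmat s t * wvec t)]
  rw [hE6]
  simp (config := { decide := true }) only [Finset.sum_insert, Finset.mem_insert,
    Finset.mem_singleton, Finset.sum_singleton, wvec, gmat]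
  norm_num


/-- **Remark 1, converse failure:** for `(x,y,z) = (3,1,2)` the matrix `A^{(4)}` is
positive definite, yet `A^{(n)}` fails to be positive semidefinite for some `n ≥ 4`. -/
theorem A4_posDef_but_not_all_PSD :
    (Amat312 4).PosDef ∧ ∃ n, 4 ≤ n ∧ ¬ (Amat312 n).PosSemidef := by
  refine ⟨partA, 6, by norm_num, fun hPSD => ?_⟩
  have h := hPSD.dotProduct_mulVec_nonneg (fun e : ↥(edgesN 6) => wvec e.1)
  rw [show star (fun e : ↥(edgesN 6) => wvec e.1) = (fun e : ↥(edgesN 6) => wvec e.1) by simp,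
    neg_quad] at h
  norm_num at h
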